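/- arXiv:1201.0925 — 2 statements merged into one kernel-verified Lean document; each statement's English description precedes it below -/
import Mathlib

section
/- Let b, c ∈ (0, π), α ∈ (0, π), and α₁ ∈ (0, α/2]. Define z by cot(z) = (cot(b)·sin(α − α₁) + cot(c)·sin(α₁)) / sin(α) with z ∈ (0, π), and define z̃ = b·c·sin(α) / (b·sin(α₁) + c·sin(α − α₁)). Then z > z̃. -/
open Real Set

private lemma cot_hasDerivAt {x : ℝ} (hx : Real.sin x ≠ 0) :
    HasDerivAt Real.cot (-1 / Real.sin x ^ 2) x := by
  have h := (Real.hasDerivAt_cos x).div (Real.hasDerivAt_sin x) hx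
  have heq : (Real.cos / Real.sin) = Real.cot := by
    funext y; simp [Real.cot_eq_cos_div_sin]
  rw [heq] at h
  refine h.congr_deriv ?_
  have h2 := Real.sin_sq_add_cos_sq x
  field_simp
  nlinarith

private lemma cot_anti {x y : ℝ} (hx : 0 < x) (hxy : x < y) (hy : y < π) :
    Real.cot y < Real.cot x := by
  have sx : 0 < Real.sin x := Real.sin_pos_of_pos_of_lt_pi hx (by linarith)
  have sy : 0 < Real.sin y := Real.sin_pos_of_pos_of_lt_pi (by linarith) hy
  have hs : 0 < Real.sin (y - x) :=
    Real.sin_pos_of_pos_of_lt_pi (by linarith) (by linarith)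
  rw [Real.cot_eq_cos_div_sin, Real.cot_eq_cos_div_sin, div_lt_div_iff₀ sy sx]
  rw [Real.sin_sub] at hs
  nlinarith

/-- `x * cot x` is strictly decreasing on `(0, π)`. -/
private lemma mul_cot_anti : StrictAntiOn (fun t => t * Real.cot t) (Ioo 0 π) := by
  have key : ∀ t ∈ Ioo (0:ℝ) π, HasDerivAt (fun t => t * Real.cot t)
      (Real.cot t + t * (-1 / Real.sin t ^ 2)) t := by
    intro t ht
    have hst : Real.sin t ≠ 0 := (Real.sin_pos_of_pos_of_lt_pi ht.1 ht.2).ne'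
    have := (hasDerivAt_id t).mul (cot_hasDerivAt hst)
    refine HasDerivAt.congr_deriv (f := fun t => t * Real.cot t) this ?_
    simp only [id_eq]
    ring
  apply strictAntiOn_of_deriv_neg (convex_Ioo 0 π)
  · intro t ht
    exact ((key t ht).differentiableAt).continuousAt.continuousWithinAt
  · intro t ht
    rw [interior_Ioo] at ht
    rw [(key t ht).deriv]
    have hst : 0 < Real.sin t := Real.sin_pos_of_pos_of_lt_pi ht.1 ht.2
    have h1 : Real.sin t * Real.cos t < t := by
      nlinarith [Real.sin_lt ht.1, Real.cos_le_one t, Real.sin_le_one t]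
    have heq : Real.cot t + t * (-1 / Real.sin t ^ 2)
        = (Real.sin t * Real.cos t - t) / Real.sin t ^ 2 := by
      rw [Real.cot_eq_cos_div_sin]; field_simp; ring
    rw [heq]
    exact div_neg_of_neg_of_pos (by linarith) (pow_pos hst 2)

/-- `sin x / x` is strictly decreasing on `(0, π)`. -/
private lemma sin_div_anti : StrictAntiOn (fun t => Real.sin t / t) (Ioo 0 π) := by
  have key : ∀ t ∈ Ioo (0:ℝ) π, HasDerivAt (fun t => Real.sin t / t)
      ((Real.cos t * t - Real.sin t * 1) / t ^ 2) t := by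
    intro t ht
    exact (Real.hasDerivAt_sin t).div (hasDerivAt_id t) ht.1.ne'
  apply strictAntiOn_of_deriv_neg (convex_Ioo 0 π)
  · intro t ht
    exact ((key t ht).differentiableAt).continuousAt.continuousWithinAt
  · intro t ht
    rw [interior_Ioo] at ht
    rw [(key t ht).deriv]
    obtain ⟨ht0, htπ⟩ := ht
    have hst : 0 < Real.sin t := Real.sin_pos_of_pos_of_lt_pi ht0 htπ
    have h1 : Real.cos t * t < Real.sin t := by
      rcases le_or_gt (Real.cos t) 0 with hc | hc
      · nlinarith
      · have htp : t < π / 2 := by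
          by_contra hcon
          push_neg at hcon
          have : Real.cos t ≤ 0 :=
            Real.cos_nonpos_of_pi_div_two_le_of_le hcon (by linarith [Real.pi_pos])
          linarith
        have := Real.lt_tan ht0 htp
        rw [Real.tan_eq_sin_div_cos, lt_div_iff₀ hc] at this
        linarith
    exact div_neg_of_neg_of_pos (by linarith) (pow_pos ht0 2)

/-- `u ↦ cot u⁻¹` is concave on `(π⁻¹, ∞)`. -/
private lemma cot_inv_concave : ConcaveOn ℝ (Ioi π⁻¹) (fun u => Real.cot u⁻¹) := by
  have hpi : (0:ℝ) < π⁻¹ := by positivity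
  have mem : ∀ u ∈ Ioi π⁻¹, u⁻¹ ∈ Ioo (0:ℝ) π := by
    intro u hu
    have hu0 : (0:ℝ) < u := lt_trans hpi hu
    constructor
    · positivity
    · rw [← inv_inv π]
      exact inv_strictAnti₀ (by positivity) hu
  have key : ∀ u ∈ Ioi π⁻¹, HasDerivAt (fun u => Real.cot u⁻¹)
      (-1 / Real.sin u⁻¹ ^ 2 * -(u ^ 2)⁻¹) u := by
    intro u hu
    have h1 := mem u hu
    have hs : Real.sin u⁻¹ ≠ 0 := (Real.sin_pos_of_pos_of_lt_pi h1.1 h1.2).ne'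
    have hu0 : (0:ℝ) < u := lt_trans hpi hu
    exact (cot_hasDerivAt hs).comp u (hasDerivAt_inv hu0.ne')
  apply AntitoneOn.concaveOn_of_deriv (convex_Ioi _)
  · intro u hu
    exact ((key u hu).differentiableAt).continuousAt.continuousWithinAt
  · intro u hu
    rw [interior_Ioi] at hu
    exact ((key u hu).differentiableAt).differentiableWithinAt
  · rw [interior_Ioi]
    intro u hu v hv huv
    rw [(key u hu).deriv, (key v hv).deriv]
    have h1 := mem u hu; have h2 := mem v hv
    have su : 0 < Real.sin u⁻¹ := Real.sin_pos_of_pos_of_lt_pi h1.1 h1.2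
    have sv : 0 < Real.sin v⁻¹ := Real.sin_pos_of_pos_of_lt_pi h2.1 h2.2
    have hu0 : (0:ℝ) < u := lt_trans (by positivity) hu
    have hv0 : (0:ℝ) < v := lt_trans (by positivity) hv
    -- u * sin u⁻¹ ≤ v * sin v⁻¹
    have hmono : u * Real.sin u⁻¹ ≤ v * Real.sin v⁻¹ := by
      rcases eq_or_lt_of_le huv with rfl | hlt
      · exact le_refl _
      · have hx : v⁻¹ < u⁻¹ := inv_strictAnti₀ hu0 hlt
        have := sin_div_anti h2 h1 hx
        simp only at this
        have e1 : Real.sin u⁻¹ / u⁻¹ = u * Real.sin u⁻¹ := by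
          rw [div_eq_mul_inv, inv_inv]; ring
        have e2 : Real.sin v⁻¹ / v⁻¹ = v * Real.sin v⁻¹ := by
          rw [div_eq_mul_inv, inv_inv]; ring
        rw [e1, e2] at this
        linarith
    have p1 : 0 < u * Real.sin u⁻¹ := by positivity
    have e1 : -1 / Real.sin u⁻¹ ^ 2 * -(u ^ 2)⁻¹ = ((u * Real.sin u⁻¹) ^ 2)⁻¹ := by
      field_simp
    have e2 : -1 / Real.sin v⁻¹ ^ 2 * -(v ^ 2)⁻¹ = ((v * Real.sin v⁻¹) ^ 2)⁻¹ := by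
      field_simp
    rw [e1, e2]
    apply inv_anti₀ (by positivity)
    nlinarith


private lemma secant_core (b c w₁ w₂ z : ℝ)
    (hb0 : 0 < b) (hbπ : b < π) (hc0 : 0 < c) (hcπ : c < π)
    (hz0 : 0 < z) (hzπ : z < π)
    (hw₁0 : 0 < w₁) (hw₂0 : 0 < w₂) (hs1 : 1 < w₁ + w₂)
    (hcz : Real.cot z = w₁ * Real.cot b + w₂ * Real.cot c) :
    (w₁ * b⁻¹ + w₂ * c⁻¹)⁻¹ < z := by
  have hs0 : (0:ℝ) < w₁ + w₂ := by linarith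
  have hbInv : b⁻¹ ∈ Ioi π⁻¹ := inv_strictAnti₀ hb0 hbπ
  have hcInv : c⁻¹ ∈ Ioi π⁻¹ := inv_strictAnti₀ hc0 hcπ
  have hpi0 : (0:ℝ) < π⁻¹ := inv_pos.mpr Real.pi_pos
  have hbi := mem_Ioi.mp hbInv
  have hci := mem_Ioi.mp hcInv
  set s : ℝ := w₁ + w₂ with hs
  set V : ℝ := w₁ / s * b⁻¹ + w₂ / s * c⁻¹ with hV
  set U : ℝ := w₁ * b⁻¹ + w₂ * c⁻¹ with hU
  have hq1 : 0 < w₁ / s := div_pos hw₁0 hs0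
  have hq2 : 0 < w₂ / s := div_pos hw₂0 hs0
  have hsum1 : w₁ / s + w₂ / s = 1 := by
    rw [← add_div, div_self hs0.ne']
  have hUsV : U = s * V := by
    rw [hU, hV]; field_simp
  have hVπ : π⁻¹ < V := by
    have p1 : w₁ / s * π⁻¹ < w₁ / s * b⁻¹ := mul_lt_mul_of_pos_left hbi hq1
    have p2 : w₂ / s * π⁻¹ < w₂ / s * c⁻¹ := mul_lt_mul_of_pos_left hci hq2
    have e : π⁻¹ = w₁ / s * π⁻¹ + w₂ / s * π⁻¹ := by
      rw [← add_mul, hsum1, one_mul]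
    rw [hV]
    linarith
  have hV0 : 0 < V := lt_trans hpi0 hVπ
  have hU0 : 0 < U := by rw [hUsV]; exact mul_pos hs0 hV0
  have hUV : V < U := by
    rw [hUsV]
    have h := mul_lt_mul_of_pos_right hs1 hV0
    rwa [one_mul] at h
  -- concavity step
  have hconc := cot_inv_concave.2 hbInv hcInv hq1.le hq2.le hsum1
  simp only [smul_eq_mul] at hconc
  have hψV : w₁ / s * Real.cot b + w₂ / s * Real.cot c ≤ Real.cot V⁻¹ := by
    rw [inv_inv, inv_inv] at hconc
    exact hconc
  have hVmem : V⁻¹ ∈ Ioo (0:ℝ) π := by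
    constructor
    · exact inv_pos.mpr hV0
    · rw [← inv_inv π]; exact inv_strictAnti₀ hpi0 hVπ
  have hUmem : U⁻¹ ∈ Ioo (0:ℝ) π := by
    constructor
    · exact inv_pos.mpr hU0
    · rw [← inv_inv π]
      exact inv_strictAnti₀ hpi0 (lt_trans hVπ hUV)
  have hUVinv : U⁻¹ < V⁻¹ := inv_strictAnti₀ hV0 hUV
  have hscale := mul_cot_anti hUmem hVmem hUVinv
  simp only at hscale
  have hkey : s * Real.cot V⁻¹ < Real.cot U⁻¹ := by
    have h := mul_lt_mul_of_pos_left hscale hU0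
    rw [← mul_assoc, ← mul_assoc, mul_inv_cancel₀ hU0.ne', one_mul] at h
    have e : U * V⁻¹ = s := by
      rw [hUsV, mul_assoc, mul_inv_cancel₀ hV0.ne', mul_one]
    rw [e] at h
    exact h
  have hfinal : Real.cot z < Real.cot U⁻¹ := by
    rw [hcz]
    have heq : w₁ * Real.cot b + w₂ * Real.cot c
        = s * (w₁ / s * Real.cot b + w₂ / s * Real.cot c) := by
      field_simp
    rw [heq]
    calc s * (w₁ / s * Real.cot b + w₂ / s * Real.cot c)
        ≤ s * Real.cot V⁻¹ := mul_le_mul_of_nonneg_left hψV hs0.le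
      _ < Real.cot U⁻¹ := hkey
  by_contra hcon
  push_neg at hcon
  rcases eq_or_lt_of_le hcon with heq | hlt
  · rw [← heq] at hfinal; linarith
  · exact absurd (cot_anti hz0 hlt hUmem.2) (by linarith)

/-- Spherical vs. Euclidean secant comparison: if `z ∈ (0, π)` satisfies the spherical
secant identity `cot z = (cot b · sin(α−α₁) + cot c · sin α₁)/ sin α`, then `z` is strictly
larger than the Euclidean secant length `z̃ = b·c·sin α/(b·sin α₁ + c·sin(α−α₁))`. -/
theorem spherical_secant_gt_euclidean (b c α α₁ z : ℝ)
    (hb : b ∈ Set.Ioo 0 π) (hc : c ∈ Set.Ioo 0 π)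
    (hα : α ∈ Set.Ioo 0 π) (hα₁ : α₁ ∈ Set.Ioc 0 (α / 2))
    (hz : z ∈ Set.Ioo 0 π)
    (hcot : Real.cot z
      = (Real.cot b * Real.sin (α - α₁) + Real.cot c * Real.sin α₁) / Real.sin α) :
    z > b * c * Real.sin α / (b * Real.sin α₁ + c * Real.sin (α - α₁)) := by
  obtain ⟨hb0, hbπ⟩ := hb
  obtain ⟨hc0, hcπ⟩ := hc
  obtain ⟨hα0, hαπ⟩ := hα
  obtain ⟨hα₁0, hα₁2⟩ := hα₁
  obtain ⟨hz0, hzπ⟩ := hz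
  have sa : 0 < Real.sin α := Real.sin_pos_of_pos_of_lt_pi hα0 hαπ
  have s1 : 0 < Real.sin α₁ :=
    Real.sin_pos_of_pos_of_lt_pi hα₁0 (by linarith)
  have s2 : 0 < Real.sin (α - α₁) :=
    Real.sin_pos_of_pos_of_lt_pi (by linarith) (by linarith)
  have hsum : Real.sin α < Real.sin α₁ + Real.sin (α - α₁) := by
    have hdecomp : Real.sin α
        = Real.sin α₁ * Real.cos (α - α₁) + Real.cos α₁ * Real.sin (α - α₁) := by
      rw [← Real.sin_add]; ring_nf
    have hc1 : Real.cos (α - α₁) ≤ 1 := Real.cos_le_one _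
    have hc2 : Real.cos α₁ < 1 := by
      have := Real.cos_lt_cos_of_nonneg_of_le_pi (le_refl 0) (by linarith) hα₁0
      rwa [Real.cos_zero] at this
    nlinarith
  have hw₁0 : 0 < Real.sin (α - α₁) / Real.sin α := div_pos s2 sa
  have hw₂0 : 0 < Real.sin α₁ / Real.sin α := div_pos s1 sa
  have hs1 : 1 < Real.sin (α - α₁) / Real.sin α + Real.sin α₁ / Real.sin α := by
    rw [← add_div, lt_div_iff₀ sa, one_mul]
    linarith
  have hcz : Real.cot z = Real.sin (α - α₁) / Real.sin α * Real.cot b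
      + Real.sin α₁ / Real.sin α * Real.cot c := by
    rw [hcot]; field_simp
  have key := secant_core b c (Real.sin (α - α₁) / Real.sin α)
      (Real.sin α₁ / Real.sin α) z hb0 hbπ hc0 hcπ hz0 hzπ hw₁0 hw₂0 hs1 hcz
  have htarget : b * c * Real.sin α / (b * Real.sin α₁ + c * Real.sin (α - α₁))
      = (Real.sin (α - α₁) / Real.sin α * b⁻¹ + Real.sin α₁ / Real.sin α * c⁻¹)⁻¹ := by
    rw [← one_div, ← one_div]
    have hden : (0:ℝ) < b * Real.sin α₁ + c * Real.sin (α - α₁) :=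
      add_pos (mul_pos hb0 s1) (mul_pos hc0 s2)
    field_simp
    ring
  rw [htarget]
  exact key
end

section
/- On the unit circle with the same data (θ₁ = 2π/5, θ₂ = −2π/5, w₁ = 1/10, w₂ = 9/10), the weighted sum-of-squared-distances function f₂ has a unique critical point on S¹ minus the two antipodal points of the data, namely the global minimizer θ̄ = w₁θ₁ + w₂θ₂ = −8π/25. -/
open Real Set

noncomputable def F : ℝ → ℝ := fun θ =>
  (1 / 2) * ((1 / 10) * Real.arccos (Real.cos (θ - 2 * π / 5)) ^ 2 +
    (9 / 10) * Real.arccos (Real.cos (θ + 2 * π / 5)) ^ 2)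

noncomputable def Q (c1 c2 : ℝ) : ℝ → ℝ := fun x =>
  (1 / 2) * ((1 / 10) * (x + c1) ^ 2 + (9 / 10) * (x + c2) ^ 2)

lemma arccos_cos_abs {x : ℝ} (h : |x| ≤ π) : Real.arccos (Real.cos x) = |x| := by
  rcases le_or_gt 0 x with hx | hx
  · rw [abs_of_nonneg hx] at h ⊢
    exact Real.arccos_cos hx h
  · rw [abs_of_neg hx] at h ⊢
    rw [← Real.cos_neg]
    exact Real.arccos_cos (by linarith) h

lemma arccos_cos_sq {x : ℝ} (h : |x| ≤ π) : Real.arccos (Real.cos x) ^ 2 = x ^ 2 := by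
  rw [arccos_cos_abs h, sq_abs]

lemma quad_deriv (c1 c2 θ : ℝ) :
    HasDerivAt (Q c1 c2) ((1 / 10) * (θ + c1) + (9 / 10) * (θ + c2)) θ := by
  have h := ((((hasDerivAt_id θ).add_const c1).pow 2).const_mul ((1:ℝ)/10)).add
      ((((hasDerivAt_id θ).add_const c2).pow 2).const_mul ((9:ℝ)/10))
  have h2 := h.const_mul ((1:ℝ)/2)
  refine h2.congr_deriv ?_
  simp [id]
  ring

lemma hA : Set.EqOn F (Q (8 * π / 5) (2 * π / 5)) (Set.Ioo (-π) (-(3 * π / 5))) := by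
  intro θ hθ
  obtain ⟨h1, h2⟩ := hθ
  have hpi := Real.pi_pos
  unfold F Q
  rw [show θ - 2 * π / 5 = (θ + 8 * π / 5) - 2 * π by ring, Real.cos_sub_two_pi,
    arccos_cos_sq (abs_le.mpr ⟨by linarith, by linarith⟩),
    arccos_cos_sq (abs_le.mpr ⟨by linarith, by linarith⟩)]

lemma hB : Set.EqOn F (Q (-(2 * π / 5)) (2 * π / 5)) (Set.Ioo (-(3 * π / 5)) (3 * π / 5)) := by
  intro θ hθ
  obtain ⟨h1, h2⟩ := hθ
  have hpi := Real.pi_pos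
  unfold F Q
  rw [arccos_cos_sq (abs_le.mpr ⟨by linarith, by linarith⟩),
    arccos_cos_sq (abs_le.mpr ⟨by linarith, by linarith⟩)]
  ring

lemma hC : Set.EqOn F (Q (-(2 * π / 5)) (-(8 * π / 5))) (Set.Ioo (3 * π / 5) (7 * π / 5)) := by
  intro θ hθ
  obtain ⟨h1, h2⟩ := hθ
  have hpi := Real.pi_pos
  unfold F Q
  rw [show θ + 2 * π / 5 = (θ - 8 * π / 5) + (1 : ℤ) * (2 * π) by push_cast; ring,
    Real.cos_add_int_mul_two_pi,
    arccos_cos_sq (abs_le.mpr ⟨by linarith, by linarith⟩),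
    arccos_cos_sq (abs_le.mpr ⟨by linarith, by linarith⟩)]
  ring

lemma triangle {θ : ℝ} (h1 : -π < θ) (h2 : θ ≤ π) :
    4 * π / 5 ≤ Real.arccos (Real.cos (θ - 2 * π / 5)) + Real.arccos (Real.cos (θ + 2 * π / 5)) := by
  have hpi := Real.pi_pos
  rcases lt_or_ge θ (-(3 * π / 5)) with hc | hc
  · rw [show θ - 2 * π / 5 = (θ + 8 * π / 5) - 2 * π by ring, Real.cos_sub_two_pi,
      arccos_cos_abs (abs_le.mpr ⟨by linarith, by linarith⟩),
      arccos_cos_abs (abs_le.mpr ⟨by linarith, by linarith⟩)]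
    rw [abs_of_nonneg (by linarith), abs_of_nonpos (by linarith)]
    linarith
  rcases le_or_gt θ (3 * π / 5) with hc2 | hc2
  · rw [arccos_cos_abs (abs_le.mpr ⟨by linarith, by linarith⟩),
      arccos_cos_abs (abs_le.mpr ⟨by linarith, by linarith⟩)]
    have h3 : (4 : ℝ) * π / 5 = |(θ + 2 * π / 5) - (θ - 2 * π / 5)| := by
      rw [abs_of_nonneg (by linarith)]; ring
    rw [h3]
    calc |(θ + 2 * π / 5) - (θ - 2 * π / 5)| ≤ |θ + 2 * π / 5| + |θ - 2 * π / 5| := abs_sub _ _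
      _ = |θ - 2 * π / 5| + |θ + 2 * π / 5| := by ring
  · rw [show θ + 2 * π / 5 = (θ - 8 * π / 5) + (1 : ℤ) * (2 * π) by push_cast; ring,
      Real.cos_add_int_mul_two_pi,
      arccos_cos_abs (abs_le.mpr ⟨by linarith, by linarith⟩),
      arccos_cos_abs (abs_le.mpr ⟨by linarith, by linarith⟩)]
    rw [abs_of_nonneg (by linarith), abs_of_nonpos (by linarith)]
    linarith

/-- On the unit circle with arc-length distance `d(θ,φ) = arccos (cos (θ − φ))`, with data
`θ₁ = 2π/5`, `θ₂ = −2π/5` and weights `w₁ = 1/10`, `w₂ = 9/10`, the weighted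
sum-of-squared-distances `f₂` has a unique critical point on the circle minus the two
antipodes `−3π/5`, `3π/5` of the data points, namely the global minimizer
`θ̄ = w₁θ₁ + w₂θ₂ = −8π/25`. -/
theorem circle_unique_critical_point :
    let f : ℝ → ℝ := fun θ =>
      (1 / 2) * ((1 / 10) * Real.arccos (Real.cos (θ - 2 * π / 5)) ^ 2 +
        (9 / 10) * Real.arccos (Real.cos (θ + 2 * π / 5)) ^ 2)
    (∀ θ ∈ Set.Ioc (-π) π, θ ≠ -3 * π / 5 → θ ≠ 3 * π / 5 →
      ((DifferentiableAt ℝ f θ ∧ deriv f θ = 0) ↔ θ = -8 * π / 25)) ∧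
    ∀ θ : ℝ, f (-8 * π / 25) ≤ f θ := by
  intro f
  have hfF : f = F := rfl
  have hpi := Real.pi_pos
  constructor
  · intro θ hθ hne1 hne2
    obtain ⟨hθl, hθr⟩ := hθ
    rw [hfF]
    constructor
    · rintro ⟨hdiff, hderiv⟩
      rcases lt_trichotomy θ (-(3 * π / 5)) with hc | hc | hc
      · have heq : F =ᶠ[nhds θ] Q (8 * π / 5) (2 * π / 5) :=
          Filter.eventuallyEq_of_mem (Ioo_mem_nhds hθl hc) hA
        rw [heq.deriv_eq, (quad_deriv _ _ θ).deriv] at hderiv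
        linarith
      · exact absurd (by linarith) hne1
      rcases lt_trichotomy θ (3 * π / 5) with hc2 | hc2 | hc2
      · have heq : F =ᶠ[nhds θ] Q (-(2 * π / 5)) (2 * π / 5) :=
          Filter.eventuallyEq_of_mem (Ioo_mem_nhds hc hc2) hB
        rw [heq.deriv_eq, (quad_deriv _ _ θ).deriv] at hderiv
        linarith
      · exact absurd (by linarith) hne2
      · have heq : F =ᶠ[nhds θ] Q (-(2 * π / 5)) (-(8 * π / 5)) :=
          Filter.eventuallyEq_of_mem (Ioo_mem_nhds hc2 (by linarith)) hC
        rw [heq.deriv_eq, (quad_deriv _ _ θ).deriv] at hderiv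
        linarith
    · intro hθeq
      subst hθeq
      have heq : F =ᶠ[nhds (-8 * π / 25)] Q (-(2 * π / 5)) (2 * π / 5) :=
        Filter.eventuallyEq_of_mem (Ioo_mem_nhds (by linarith) (by linarith)) hB
      constructor
      · exact heq.differentiableAt_iff.mpr (quad_deriv _ _ _).differentiableAt
      · rw [heq.deriv_eq, (quad_deriv _ _ _).deriv]
        ring
  · intro θ
    rw [hfF]
    set k : ℤ := toIocDiv Real.two_pi_pos (-π) θ with hk
    set θ' : ℝ := toIocMod Real.two_pi_pos (-π) θ with hθ'
    have hmem : θ' ∈ Set.Ioc (-π) (-π + 2 * π) := toIocMod_mem_Ioc _ _ _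
    have hdecomp : θ = θ' + k * (2 * π) := by
      rw [hθ', hk, toIocMod, zsmul_eq_mul]
      ring
    have hFθ : F θ = F θ' := by
      unfold F
      rw [show θ - 2 * π / 5 = (θ' - 2 * π / 5) + (k : ℝ) * (2 * π) by rw [hdecomp]; ring,
        show θ + 2 * π / 5 = (θ' + 2 * π / 5) + (k : ℝ) * (2 * π) by rw [hdecomp]; ring,
        Real.cos_add_int_mul_two_pi, Real.cos_add_int_mul_two_pi]
    rw [hFθ]
    obtain ⟨h1, h2⟩ := hmem
    have h2' : θ' ≤ π := by linarith
    have htri := triangle h1 h2'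
    set a := Real.arccos (Real.cos (θ' - 2 * π / 5)) with ha
    set b := Real.arccos (Real.cos (θ' + 2 * π / 5)) with hb
    have ha0 : 0 ≤ a := Real.arccos_nonneg _
    have hb0 : 0 ≤ b := Real.arccos_nonneg _
    have hFval : F (-8 * π / 25) =
        (1 / 2) * ((1 / 10) * (18 * π / 25) ^ 2 + (9 / 10) * (2 * π / 25) ^ 2) := by
      unfold F
      rw [show (-8 * π / 25 - 2 * π / 5 : ℝ) = -(18 * π / 25) by ring,
        show (-8 * π / 25 + 2 * π / 5 : ℝ) = 2 * π / 25 by ring,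
        arccos_cos_sq (abs_le.mpr ⟨by linarith, by linarith⟩),
        arccos_cos_sq (abs_le.mpr ⟨by linarith, by linarith⟩)]
      ring
    rw [hFval]
    unfold F
    rw [← ha, ← hb]
    nlinarith [sq_nonneg (a - 9 * b), sq_nonneg (a + b - 4 * π / 5), sq_nonneg (a + b)]
end
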